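/- Let φ be an analytic self-map of the unit disc D and ω a radial weight. Define the generalized Nevanlinna counting function N_{φ,ω*}(z) = Σ_{ζ ∈ φ⁻¹(z)} ω*(ζ) (points repeated with multiplicity, and ω*(ζ) = 0 for |ζ| = 1), where ω*(ζ) = ∫_{|ζ|}^1 ω(s) log(s/|ζ|) s ds. Then for every z ∈ D with z ≠ φ(0), N_{φ,ω*}(z) ≤ ω*( (z - φ(0)) / (1 - conj(φ(0)) z) ). -/

import Mathlib

open MeasureTheory Set Metric
open scoped Classical

open Filter
open scoped Topology

/-- The multiplicity of `ζ` as a preimage of `z` under `φ` (the order of the zero of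
`φ - z` at `ζ`, and `0` if `φ - z` is not analytic at `ζ` or the order is infinite). -/
noncomputable def multOf (φ : ℂ → ℂ) (z ζ : ℂ) : ℕ :=
  if h : AnalyticAt ℂ (fun w => φ w - z) ζ then (analyticOrderAt (fun w => φ w - z) ζ).toNat else 0

/-- `ω*(r) = ∫_r^1 ω(s) log(s/r) s ds` (which vanishes for `r = 1`). -/
noncomputable def wstar (ω : ℝ → ℝ) (r : ℝ) : ℝ :=
  ∫ s in Set.Ioo r 1, ω s * Real.log (s / r) * s

lemma normSq_eq_norm_sq (z : ℂ) : Complex.normSq z = ‖z‖ ^ 2 := by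
  rw [Complex.normSq_eq_norm_sq]

lemma normSq_mobius_identity (a b : ℂ) :
    Complex.normSq (1 - (starRingEnd ℂ) b * a) - Complex.normSq (a - b)
      = (1 - Complex.normSq a) * (1 - Complex.normSq b) := by
  simp only [Complex.normSq_apply, Complex.sub_re, Complex.sub_im, Complex.mul_re,
    Complex.mul_im, Complex.one_re, Complex.one_im, Complex.conj_re, Complex.conj_im]
  ring

lemma mobius_lt_one {a b : ℂ} (ha : ‖a‖ < 1) (hb : ‖b‖ < 1) :
    ‖a - b‖ < ‖1 - (starRingEnd ℂ) b * a‖ := by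
  have h1 : Complex.normSq a < 1 := by
    rw [normSq_eq_norm_sq]; nlinarith [norm_nonneg a]
  have h2 : Complex.normSq b < 1 := by
    rw [normSq_eq_norm_sq]; nlinarith [norm_nonneg b]
  have key := normSq_mobius_identity a b
  have h3 : Complex.normSq (a - b) < Complex.normSq (1 - (starRingEnd ℂ) b * a) := by nlinarith
  have e1 : ‖a - b‖ ^ 2 = Complex.normSq (a - b) := (normSq_eq_norm_sq _).symm
  have e2 : ‖1 - (starRingEnd ℂ) b * a‖ ^ 2 = Complex.normSq _ := (normSq_eq_norm_sq _).symm
  nlinarith [norm_nonneg (a - b), norm_nonneg (1 - (starRingEnd ℂ) b * a)]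

-- KL2: sharp circle bound
lemma blaschke_circle_bound {a u : ℂ} {r : ℝ} (hu : ‖u‖ = r) (ha : ‖a‖ < r) (hr : r ≤ 1) :
    ‖1 - (starRingEnd ℂ) a * u‖ * (r - ‖a‖) ≤ ‖u - a‖ * (1 - ‖a‖ * r) := by
  set A := ‖a‖ with hA
  have hA0 : 0 ≤ A := norm_nonneg a
  set t := ((starRingEnd ℂ) a * u).re with hts
  have ht : t ≤ A * r := by
    calc t ≤ ‖(starRingEnd ℂ) a * u‖ := Complex.re_le_norm _
    _ = A * r := by simp only [norm_mul, RCLike.norm_conj, hu, hA]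
  have e1 : ‖1 - (starRingEnd ℂ) a * u‖ ^ 2 = 1 - 2 * t + Complex.normSq a * Complex.normSq u := by
    rw [← normSq_eq_norm_sq]
    simp only [hts, Complex.normSq_apply, Complex.sub_re, Complex.sub_im, Complex.mul_re,
      Complex.mul_im, Complex.one_re, Complex.one_im, Complex.conj_re, Complex.conj_im]
    ring
  have e2 : ‖u - a‖ ^ 2 = Complex.normSq u - 2 * t + Complex.normSq a := by
    rw [← normSq_eq_norm_sq]
    simp only [hts, Complex.normSq_apply, Complex.sub_re, Complex.sub_im, Complex.mul_re,
      Complex.mul_im, Complex.conj_re, Complex.conj_im]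
    ring
  have nsa : Complex.normSq a = A ^ 2 := normSq_eq_norm_sq a
  have nsu : Complex.normSq u = r ^ 2 := by rw [normSq_eq_norm_sq, hu]
  rw [nsa, nsu] at e1 e2
  have hr0 : 0 < r := lt_of_le_of_lt hA0 ha
  have h1Ar : 0 < 1 - A * r := by nlinarith
  have hrA : 0 < r - A := by linarith
  have hsq : (‖1 - (starRingEnd ℂ) a * u‖ * (r - A)) ^ 2 ≤ (‖u - a‖ * (1 - A * r)) ^ 2 := by
    have hfac : (r - A) ^ 2 ≤ (1 - A * r) ^ 2 := by
      nlinarith [mul_nonneg (sub_nonneg.mpr hr) (by linarith : (0:ℝ) ≤ 1 + A)]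
    have key : (A * r - t) * ((1 - A * r) ^ 2 - (r - A) ^ 2) ≥ 0 :=
      mul_nonneg (by linarith) (by linarith)
    calc (‖1 - (starRingEnd ℂ) a * u‖ * (r - A)) ^ 2
        = (1 - 2 * t + A ^ 2 * r ^ 2) * (r - A) ^ 2 := by rw [mul_pow, e1]
      _ ≤ (r ^ 2 - 2 * t + A ^ 2) * (1 - A * r) ^ 2 := by nlinarith
      _ = (‖u - a‖ * (1 - A * r)) ^ 2 := by rw [mul_pow, e2]
  have hL : 0 ≤ ‖1 - (starRingEnd ℂ) a * u‖ * (r - A) :=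
    mul_nonneg (norm_nonneg _) hrA.le
  have hR : 0 ≤ ‖u - a‖ * (1 - A * r) := mul_nonneg (norm_nonneg _) h1Ar.le
  nlinarith [hsq, hL, hR]


lemma littlewood_aux (N : ℕ) : ∀ (f : ℂ → ℂ) (s : Finset ℂ) (m : ℂ → ℕ),
    (∑ ζ ∈ s, m ζ) = N →
    DifferentiableOn ℂ f (ball 0 1) →
    (∀ w ∈ ball (0:ℂ) 1, ‖f w‖ ≤ 1) →
    (∀ ζ ∈ s, ζ ∈ ball (0:ℂ) 1) →
    (∀ ζ ∈ s, ∃ g : ℂ → ℂ, ContinuousAt g ζ ∧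
      ∀ᶠ w in 𝓝[≠] ζ, f w = (w - ζ) ^ (m ζ) * g w) →
    ‖f 0‖ ≤ ∏ ζ ∈ s, ‖ζ‖ ^ (m ζ) := by
  induction N with
  | zero =>
    intro f s m hsum hd hb hs hm
    have hz : ∀ ζ ∈ s, m ζ = 0 := by
      intro ζ hζ
      exact (Finset.sum_eq_zero_iff.mp hsum) ζ hζ
    have : ∏ ζ ∈ s, ‖ζ‖ ^ (m ζ) = 1 :=
      Finset.prod_eq_one fun ζ hζ => by rw [hz ζ hζ, pow_zero]
    rw [this]
    exact hb 0 (mem_ball_self one_pos)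
  | succ N IH =>
    intro f s m hsum hd hb hs hm
    obtain ⟨ζ0, hζ0s, hmζ0⟩ : ∃ ζ0 ∈ s, m ζ0 ≠ 0 := by
      by_contra h
      push_neg at h
      rw [Finset.sum_eq_zero h] at hsum
      exact Nat.succ_ne_zero N hsum.symm
    obtain ⟨g0, hg0c, hg0⟩ := hm ζ0 hζ0s
    have hζ0b : ζ0 ∈ ball (0:ℂ) 1 := hs ζ0 hζ0s
    have hA : ‖ζ0‖ < 1 := mem_ball_zero_iff.mp hζ0b
    have hA0 : (0:ℝ) ≤ ‖ζ0‖ := norm_nonneg _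
    -- f vanishes at ζ0
    have hfζ0 : f ζ0 = 0 := by
      have hcont : ContinuousAt f ζ0 :=
        (hd.differentiableAt (isOpen_ball.mem_nhds hζ0b)).continuousAt
      have h1 : Tendsto f (𝓝[≠] ζ0) (𝓝 (f ζ0)) :=
        hcont.tendsto.mono_left nhdsWithin_le_nhds
      have h2 : Tendsto f (𝓝[≠] ζ0) (𝓝 0) := by
        have h3 : Tendsto (fun w => (w - ζ0) ^ (m ζ0) * g0 w) (𝓝 ζ0)
            (𝓝 ((ζ0 - ζ0) ^ (m ζ0) * g0 ζ0)) := by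
          exact (((continuous_id.sub continuous_const).pow _).continuousAt).mul hg0c
        rw [sub_self, zero_pow hmζ0, zero_mul] at h3
        exact (h3.mono_left nhdsWithin_le_nhds).congr'
          (hg0.mono fun w hw => hw.symm)
      exact tendsto_nhds_unique h1 h2
    set f' : ℂ → ℂ := fun w => dslope f ζ0 w * (1 - (starRingEnd ℂ) ζ0 * w) with hf'def
    have hfact : ∀ w : ℂ, w ≠ ζ0 → f' w = f w / (w - ζ0) * (1 - (starRingEnd ℂ) ζ0 * w) := by
      intro w hw
      rw [hf'def]
      simp only [dslope_of_ne f hw, slope_def_field, hfζ0, sub_zero]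
    have hd' : DifferentiableOn ℂ f' (ball 0 1) :=
      ((Complex.differentiableOn_dslope (isOpen_ball.mem_nhds hζ0b)).mpr hd).mul
        ((differentiable_const (1:ℂ)).sub (differentiable_const _ |>.mul differentiable_id)
          |>.differentiableOn)
    -- bound on f'
    have hb' : ∀ w ∈ ball (0:ℂ) 1, ‖f' w‖ ≤ 1 := by
      intro w hw
      have hw1 : ‖w‖ < 1 := mem_ball_zero_iff.mp hw
      set A := ‖ζ0‖ with hAdef
      have hmax : max ‖w‖ A < 1 := max_lt hw1 hA
      have hev : ∀ᶠ r in 𝓝[<] (1:ℝ), ‖f' w‖ ≤ (1 - A * r) / (r - A) := by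
        filter_upwards [Ioo_mem_nhdsLT_of_mem ⟨hmax, le_refl (1:ℝ)⟩] with r hr
        have hrw : ‖w‖ < r := lt_of_le_of_lt (le_max_left _ _) hr.1
        have hrA : A < r := lt_of_le_of_lt (le_max_right _ _) hr.1
        have hr0 : (0:ℝ) < r := lt_of_le_of_lt hA0 hrA
        have hr1 : r < 1 := hr.2
        have hdc : DiffContOnCl ℂ f' (ball 0 r) := by
          refine DifferentiableOn.diffContOnCl ?_
          rw [closure_ball (0:ℂ) hr0.ne']
          exact hd'.mono (closedBall_subset_ball hr1)
        refine Complex.norm_le_of_forall_mem_frontier_norm_le isBounded_ball hdc ?_ ?_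
        · rw [frontier_ball (0:ℂ) hr0.ne']
          intro u hu
          have hur : ‖u‖ = r := mem_sphere_zero_iff_norm.mp hu
          have huζ : u ≠ ζ0 := by
            intro h
            rw [h] at hur
            exact hrA.ne hur
          have hub : u ∈ ball (0:ℂ) 1 := mem_ball_zero_iff.mpr (hur ▸ hr1)
          have hfu : ‖f u‖ ≤ 1 := hb u hub
          have hKL : ‖1 - (starRingEnd ℂ) ζ0 * u‖ * (r - A) ≤ ‖u - ζ0‖ * (1 - A * r) :=
            blaschke_circle_bound hur hrA hr1.le
          rw [hfact u huζ, norm_mul, norm_div]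
          have hud : (0:ℝ) < ‖u - ζ0‖ := norm_pos_iff.mpr (sub_ne_zero.mpr huζ)
          rw [div_mul_eq_mul_div, div_le_div_iff₀ hud (by linarith : (0:ℝ) < r - A)]
          nlinarith [norm_nonneg (1 - (starRingEnd ℂ) ζ0 * u), norm_nonneg (f u),
            mul_nonneg (norm_nonneg (1 - (starRingEnd ℂ) ζ0 * u)) (by linarith : (0:ℝ) ≤ r - A)]
        · rw [closure_ball (0:ℂ) hr0.ne']
          exact mem_closedBall_zero_iff.mpr hrw.le
      have hA1 : (1:ℝ) - A ≠ 0 := by linarith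
      have hc : Tendsto (fun r : ℝ => (1 - A * r) / (r - A)) (𝓝 1) (𝓝 1) := by
        have hc' : ContinuousAt (fun r : ℝ => (1 - A * r) / (r - A)) 1 := by
          apply ContinuousAt.div (by fun_prop) (by fun_prop)
          simpa using hA1
        have := hc'.tendsto
        rwa [show (1 - A * 1) / ((1:ℝ) - A) = 1 by rw [mul_one]; exact div_self hA1] at this
      exact ge_of_tendsto (hc.mono_left nhdsWithin_le_nhds) hev
    -- new multiplicities
    obtain ⟨k, hk⟩ : ∃ k, m ζ0 = k + 1 :=
      ⟨m ζ0 - 1, (Nat.succ_pred_eq_of_pos (Nat.pos_of_ne_zero hmζ0)).symm⟩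
    set m' : ℂ → ℕ := Function.update m ζ0 k with hm'def
    have hsum' : (∑ ζ ∈ s, m' ζ) = N := by
      have e1 : m ζ0 + ∑ ζ ∈ s.erase ζ0, m ζ = ∑ ζ ∈ s, m ζ := Finset.add_sum_erase s m hζ0s
      have e2 : m' ζ0 + ∑ ζ ∈ s.erase ζ0, m' ζ = ∑ ζ ∈ s, m' ζ := Finset.add_sum_erase s m' hζ0s
      have e3 : ∑ ζ ∈ s.erase ζ0, m' ζ = ∑ ζ ∈ s.erase ζ0, m ζ :=
        Finset.sum_congr rfl fun ζ hζ => by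
          rw [hm'def, Function.update_of_ne (Finset.ne_of_mem_erase hζ)]
      have e4 : m' ζ0 = k := Function.update_self _ _ _
      omega
    have hm' : ∀ ζ ∈ s, ∃ g : ℂ → ℂ, ContinuousAt g ζ ∧
        ∀ᶠ w in 𝓝[≠] ζ, f' w = (w - ζ) ^ (m' ζ) * g w := by
      intro ζ hζs
      obtain ⟨g, hgc, hg⟩ := hm ζ hζs
      by_cases hζ : ζ = ζ0
      · subst hζ
        refine ⟨fun w => g w * (1 - (starRingEnd ℂ) ζ * w), hgc.mul (by fun_prop), ?_⟩
        filter_upwards [hg, self_mem_nhdsWithin] with w hw hwne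
        have hwζ : w ≠ ζ := hwne
        have hwz : w - ζ ≠ 0 := sub_ne_zero.mpr hwζ
        rw [hfact w hwζ, hw, hm'def, Function.update_self, hk, pow_succ]
        field_simp
      · refine ⟨fun w => g w * ((1 - (starRingEnd ℂ) ζ0 * w) / (w - ζ0)),
          hgc.mul (ContinuousAt.div (by fun_prop) (by fun_prop) (sub_ne_zero.mpr hζ)), ?_⟩
        have hne : ∀ᶠ w in 𝓝[≠] ζ, w ≠ ζ0 :=
          eventually_nhdsWithin_of_eventually_nhds (isOpen_ne.mem_nhds hζ)
        filter_upwards [hg, hne] with w hw hwζ0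
        rw [hfact w hwζ0, hw, hm'def, Function.update_of_ne hζ]
        field_simp
    have hend := IH f' s m' hsum' hd' hb' hs hm'
    -- combine
    have key : f 0 = (0 - ζ0) * dslope f ζ0 0 := by
      have h := sub_smul_dslope f ζ0 0
      rw [hfζ0, sub_zero, smul_eq_mul] at h
      exact h.symm
    have hf0 : ‖f 0‖ = ‖ζ0‖ * ‖dslope f ζ0 0‖ := by
      rw [key, norm_mul, zero_sub, norm_neg]
    have hf'0 : ‖f' 0‖ = ‖dslope f ζ0 0‖ := by
      rw [hf'def]
      simp
    have p2 : ∏ ζ ∈ s, ‖ζ‖ ^ (m' ζ) = ‖ζ0‖ ^ k * ∏ ζ ∈ s.erase ζ0, ‖ζ‖ ^ (m ζ) := by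
      rw [← Finset.mul_prod_erase s _ hζ0s, hm'def, Function.update_self]
      congr 1
      exact Finset.prod_congr rfl fun ζ hζ => by
        rw [Function.update_of_ne (Finset.ne_of_mem_erase hζ)]
    have p1 : ∏ ζ ∈ s, ‖ζ‖ ^ (m ζ) = ‖ζ0‖ ^ (m ζ0) * ∏ ζ ∈ s.erase ζ0, ‖ζ‖ ^ (m ζ) :=
      (Finset.mul_prod_erase s _ hζ0s).symm
    calc ‖f 0‖ = ‖ζ0‖ * ‖f' 0‖ := by rw [hf0, hf'0]
      _ ≤ ‖ζ0‖ * ∏ ζ ∈ s, ‖ζ‖ ^ (m' ζ) := mul_le_mul_of_nonneg_left hend hA0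
      _ = ∏ ζ ∈ s, ‖ζ‖ ^ (m ζ) := by
          rw [p2, p1, hk, pow_succ]
          ring


lemma wstar_nonneg (ω : ℝ → ℝ) (hω : ∀ r ∈ Set.Ico (0:ℝ) 1, 0 ≤ ω r) {r : ℝ} (hr : 0 ≤ r) :
    0 ≤ wstar ω r := by
  refine setIntegral_nonneg measurableSet_Ioo fun t ht => ?_
  rcases hr.eq_or_lt with h0 | h0
  · rw [← h0, div_zero, Real.log_zero, mul_zero, zero_mul]
  · have ht0 : 0 < t := lt_trans h0 ht.1
    have hlog : 0 ≤ Real.log (t / r) :=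
      Real.log_nonneg ((one_le_div h0).mpr ht.1.le)
    exact mul_nonneg (mul_nonneg (hω t ⟨hr.trans ht.1.le, ht.2⟩) hlog) ht0.le

lemma mult_integrable (ω : ℝ → ℝ) (hω_int : IntegrableOn ω (Set.Ioo (0:ℝ) 1))
    {a r : ℝ} (ha : 0 ≤ a) (hr : 0 < r) :
    IntegrableOn (fun t => ω t * (max 0 (Real.log (t / r)) * t)) (Set.Ioo a 1) := by
  have hω' : IntegrableOn ω (Set.Ioo a 1) := hω_int.mono_set (Set.Ioo_subset_Ioo ha le_rfl)
  have hmeas : AEStronglyMeasurable (fun t => max 0 (Real.log (t / r)) * t)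
      (volume.restrict (Set.Ioo a 1)) :=
    (((measurable_const.max (Real.measurable_log.comp (measurable_id.div_const r))).mul
      measurable_id)).aestronglyMeasurable
  have hbd : ∀ᵐ t ∂(volume.restrict (Set.Ioo a 1)),
      ‖max 0 (Real.log (t / r)) * t‖ ≤ max 0 (Real.log (1 / r)) := by
    rw [ae_restrict_iff' measurableSet_Ioo]
    refine Filter.Eventually.of_forall fun t ht => ?_
    have ht0 : 0 < t := lt_of_le_of_lt ha ht.1
    have hm0 : 0 ≤ max 0 (Real.log (t / r)) := le_max_left _ _
    rw [Real.norm_eq_abs, abs_of_nonneg (mul_nonneg hm0 ht0.le)]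
    have hlog : max 0 (Real.log (t / r)) ≤ max 0 (Real.log (1 / r)) := by
      refine max_le_max le_rfl (Real.log_le_log (div_pos ht0 hr) ?_)
      exact (div_le_div_iff_of_pos_right hr).mpr ht.2.le
    calc max 0 (Real.log (t / r)) * t ≤ max 0 (Real.log (1 / r)) * 1 :=
          mul_le_mul hlog ht.2.le ht0.le (le_max_left _ _)
      _ = _ := mul_one _
  have h := Integrable.bdd_mul (c := max 0 (Real.log (1 / r))) hω' hmeas hbd
  have h2 : (fun t => (max 0 (Real.log (t / r)) * t) * ω t)
      = fun t => ω t * (max 0 (Real.log (t / r)) * t) := funext fun t => mul_comm _ _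
  rw [h2] at h
  exact h

lemma wstar_eq (ω : ℝ → ℝ) (hω_int : IntegrableOn ω (Set.Ioo (0:ℝ) 1))
    {d r : ℝ} (hd : 0 < d) (hdr : d ≤ r) (hr1 : r < 1) :
    wstar ω r = ∫ t in Set.Ioo d 1, ω t * (max 0 (Real.log (t / r)) * t) := by
  have hr0 : 0 < r := lt_of_lt_of_le hd hdr
  have hsplit : Set.Ioo d 1 = Set.Ioc d r ∪ Set.Ioo r 1 := (Set.Ioc_union_Ioo_eq_Ioo hdr hr1).symm
  have hint2 : IntegrableOn (fun t => ω t * (max 0 (Real.log (t / r)) * t)) (Set.Ioo r 1) :=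
    mult_integrable ω hω_int hr0.le hr0
  have hint1 : IntegrableOn (fun t => ω t * (max 0 (Real.log (t / r)) * t)) (Set.Ioc d r) := by
    refine (integrableOn_zero (ε' := ℝ)).congr_fun (fun t ht => ?_) measurableSet_Ioc
    have : Real.log (t / r) ≤ 0 :=
      Real.log_nonpos (div_nonneg (le_of_lt (lt_of_lt_of_le hd ht.1.le)) hr0.le)
        ((div_le_one hr0).mpr ht.2)
    simp [max_eq_left this]
  rw [hsplit, setIntegral_union
    (by rw [Set.disjoint_left]; rintro x ⟨_, h2⟩ ⟨h3, _⟩; exact absurd h3 (not_lt.mpr h2)) measurableSet_Ioo hint1 hint2]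
  have hzero : ∫ t in Set.Ioc d r, ω t * (max 0 (Real.log (t / r)) * t) = 0 := by
    rw [setIntegral_congr_fun measurableSet_Ioc (g := fun _ => (0:ℝ)) ?_, integral_zero]
    intro t ht
    have : Real.log (t / r) ≤ 0 :=
      Real.log_nonpos (div_nonneg (le_of_lt (lt_of_lt_of_le hd ht.1.le)) hr0.le)
        ((div_le_one hr0).mpr ht.2)
    simp [max_eq_left this]
  rw [hzero, zero_add]
  refine (setIntegral_congr_fun measurableSet_Ioo fun t ht => ?_).symm
  have hpos : 0 ≤ Real.log (t / r) := Real.log_nonneg ((one_le_div hr0).mpr ht.1.le)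
  rw [max_eq_right hpos, mul_assoc]


lemma finset_bound (ω : ℝ → ℝ)
    (hω_nonneg : ∀ r ∈ Set.Ico (0:ℝ) 1, 0 ≤ ω r)
    (hω_int : IntegrableOn ω (Set.Ioo (0:ℝ) 1))
    (F : ℂ → ℂ) (hdF : DifferentiableOn ℂ F (ball 0 1))
    (hbF : ∀ w ∈ ball (0:ℂ) 1, ‖F w‖ ≤ 1)
    (hd0 : 0 < ‖F 0‖) (hd1 : ‖F 0‖ < 1)
    (s : Finset ℂ) (m : ℂ → ℕ) (hsb : ∀ ζ ∈ s, ζ ∈ ball (0:ℂ) 1)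
    (hfac : ∀ ζ ∈ s, ∃ g : ℂ → ℂ, ContinuousAt g ζ ∧
      ∀ᶠ w in 𝓝[≠] ζ, F w = (w - ζ) ^ (m ζ) * g w) :
    ∑ ζ ∈ s, (m ζ : ℝ) * wstar ω ‖ζ‖ ≤ wstar ω ‖F 0‖ := by
  set d := ‖F 0‖ with hddef
  have hLit := littlewood_aux (∑ ζ ∈ s, m ζ) F s m rfl hdF hbF hsb hfac
  have hlow : ∀ ζ ∈ s, m ζ ≠ 0 → d ≤ ‖ζ‖ := by
    intro ζ hζ hm
    have h1 := littlewood_aux (m ζ) F {ζ} m (by simp) hdF hbF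
      (by simpa using hsb ζ hζ) (by simpa using hfac ζ hζ)
    rw [Finset.prod_singleton] at h1
    have h2 : ‖ζ‖ ^ (m ζ) ≤ ‖ζ‖ ^ 1 :=
      pow_le_pow_of_le_one (norm_nonneg ζ)
        (le_of_lt (mem_ball_zero_iff.mp (hsb ζ hζ))) (Nat.one_le_iff_ne_zero.mpr hm)
    rw [pow_one] at h2
    exact le_trans h1 h2
  have hlog : Real.log d ≤ ∑ ζ ∈ s, (m ζ : ℝ) * Real.log ‖ζ‖ := by
    have h1 : Real.log d ≤ Real.log (∏ ζ ∈ s, ‖ζ‖ ^ m ζ) := Real.log_le_log hd0 hLit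
    rw [Real.log_prod] at h1
    · refine le_trans h1 (le_of_eq (Finset.sum_congr rfl fun ζ hζ => ?_))
      rw [Real.log_pow]
    · intro ζ hζ
      by_cases hm : m ζ = 0
      · simp [hm]
      · exact pow_ne_zero _ (ne_of_gt (lt_of_lt_of_le hd0 (hlow ζ hζ hm)))
  have hlogd : Real.log d < 0 := Real.log_neg hd0 hd1
  have hsubl : ∀ t ∈ Set.Ioo d (1:ℝ),
      ∑ ζ ∈ s, (m ζ : ℝ) * max 0 (Real.log (t / ‖ζ‖)) ≤ Real.log (t / d) := by
    intro t ht
    have ht0 : 0 < t := lt_trans hd0 ht.1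
    have hx0 : Real.log t < 0 := Real.log_neg ht0 ht.2
    have hxd : Real.log d < Real.log t := Real.log_lt_log hd0 ht.1
    set x := Real.log t with hxdef
    set xd := Real.log d with hxddef
    have claim : ∀ ζ ∈ s, (m ζ : ℝ) * max 0 (Real.log (t / ‖ζ‖))
        ≤ ((x - xd) / (-xd)) * ((m ζ : ℝ) * (-(Real.log ‖ζ‖))) := by
      intro ζ hζ
      by_cases hm : m ζ = 0
      · simp [hm]
      · have hζ0 : 0 < ‖ζ‖ := lt_of_lt_of_le hd0 (hlow ζ hζ hm)
        have hζ1 : ‖ζ‖ < 1 := mem_ball_zero_iff.mp (hsb ζ hζ)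
        set a := Real.log ‖ζ‖ with hadef
        have ha0 : a ≤ 0 := Real.log_nonpos (norm_nonneg ζ) hζ1.le
        have had : xd ≤ a := Real.log_le_log hd0 (hlow ζ hζ hm)
        have hlogdiv : Real.log (t / ‖ζ‖) = x - a := Real.log_div ht0.ne' hζ0.ne'
        rw [hlogdiv]
        have hin : max 0 (x - a) ≤ ((x - xd) / (-xd)) * (-a) := by
          apply max_le
          · exact mul_nonneg (div_nonneg (by linarith) (by linarith)) (by linarith)
          · rw [div_mul_eq_mul_div, le_div_iff₀ (by linarith : (0:ℝ) < -xd)]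
            nlinarith [mul_nonneg (neg_nonneg.mpr hx0.le) (sub_nonneg.mpr had)]
        calc (m ζ : ℝ) * max 0 (x - a) ≤ (m ζ : ℝ) * (((x - xd) / (-xd)) * (-a)) :=
              mul_le_mul_of_nonneg_left hin (Nat.cast_nonneg _)
          _ = ((x - xd) / (-xd)) * ((m ζ : ℝ) * (-a)) := by ring
    calc ∑ ζ ∈ s, (m ζ : ℝ) * max 0 (Real.log (t / ‖ζ‖))
        ≤ ∑ ζ ∈ s, ((x - xd) / (-xd)) * ((m ζ : ℝ) * (-(Real.log ‖ζ‖))) :=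
          Finset.sum_le_sum claim
      _ = ((x - xd) / (-xd)) * ∑ ζ ∈ s, (m ζ : ℝ) * (-(Real.log ‖ζ‖)) :=
          (Finset.mul_sum _ _ _).symm
      _ ≤ ((x - xd) / (-xd)) * (-xd) := by
          refine mul_le_mul_of_nonneg_left ?_ (div_nonneg (by linarith) (by linarith))
          have he : ∑ ζ ∈ s, (m ζ : ℝ) * (-(Real.log ‖ζ‖))
              = -∑ ζ ∈ s, (m ζ : ℝ) * Real.log ‖ζ‖ := by
            rw [← Finset.sum_neg_distrib]
            exact Finset.sum_congr rfl fun ζ _ => by ring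
          rw [he]; linarith
      _ = x - xd := div_mul_cancel₀ _ (by linarith : (-xd) ≠ 0)
      _ = Real.log (t / d) := (Real.log_div ht0.ne' hd0.ne').symm
  have hper : ∀ ζ ∈ s, (m ζ : ℝ) * wstar ω ‖ζ‖
      = ∫ t in Set.Ioo d 1, (m ζ : ℝ) * (ω t * (max 0 (Real.log (t / ‖ζ‖)) * t)) := by
    intro ζ hζ
    by_cases hm : m ζ = 0
    · simp [hm]
    · rw [wstar_eq ω hω_int hd0 (hlow ζ hζ hm) (mem_ball_zero_iff.mp (hsb ζ hζ))]
      exact (integral_const_mul _ _).symm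
  have hintg : ∀ ζ ∈ s, IntegrableOn
      (fun t => (m ζ : ℝ) * (ω t * (max 0 (Real.log (t / ‖ζ‖)) * t))) (Set.Ioo d 1) := by
    intro ζ hζ
    by_cases hm : m ζ = 0
    · simpa [hm] using (integrableOn_zero :
        IntegrableOn (fun _ : ℝ => (0:ℝ)) (Set.Ioo d 1) volume)
    · exact (mult_integrable ω hω_int hd0.le (lt_of_lt_of_le hd0 (hlow ζ hζ hm))).const_mul _
  calc ∑ ζ ∈ s, (m ζ : ℝ) * wstar ω ‖ζ‖
      = ∑ ζ ∈ s, ∫ t in Set.Ioo d 1,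
          (m ζ : ℝ) * (ω t * (max 0 (Real.log (t / ‖ζ‖)) * t)) := Finset.sum_congr rfl hper
    _ = ∫ t in Set.Ioo d 1, ∑ ζ ∈ s,
          (m ζ : ℝ) * (ω t * (max 0 (Real.log (t / ‖ζ‖)) * t)) :=
        (integral_finset_sum s hintg).symm
    _ ≤ ∫ t in Set.Ioo d 1, ω t * (max 0 (Real.log (t / d)) * t) := by
        refine setIntegral_mono_on (integrable_finset_sum s hintg)
          (mult_integrable ω hω_int hd0.le hd0) measurableSet_Ioo ?_
        intro t ht
        have ht0 : 0 < t := lt_trans hd0 ht.1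
        have hωt : 0 ≤ ω t := hω_nonneg t ⟨ht0.le, ht.2⟩
        have hfactor : ∑ ζ ∈ s, (m ζ : ℝ) * (ω t * (max 0 (Real.log (t / ‖ζ‖)) * t))
            = (ω t * t) * ∑ ζ ∈ s, (m ζ : ℝ) * max 0 (Real.log (t / ‖ζ‖)) := by
          rw [Finset.mul_sum]
          exact Finset.sum_congr rfl fun ζ _ => by ring
        rw [hfactor]
        have hmax : max 0 (Real.log (t / d)) = Real.log (t / d) :=
          max_eq_right (Real.log_nonneg ((one_le_div hd0).mpr ht.1.le))
        calc (ω t * t) * ∑ ζ ∈ s, (m ζ : ℝ) * max 0 (Real.log (t / ‖ζ‖))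
            ≤ (ω t * t) * Real.log (t / d) :=
              mul_le_mul_of_nonneg_left (hsubl t ht) (mul_nonneg hωt ht0.le)
          _ = ω t * (max 0 (Real.log (t / d)) * t) := by rw [hmax]; ring
    _ = wstar ω d := (wstar_eq ω hω_int hd0 le_rfl hd1).symm


/-- The generalized Nevanlinna counting function
`N_{φ,ω*}(z) = Σ_{ζ ∈ φ⁻¹(z)} ω*(|ζ|)`, preimages counted with multiplicity. -/
noncomputable def nev (ω : ℝ → ℝ) (φ : ℂ → ℂ) (z : ℂ) : ℝ :=
  ∑' ζ : ↥(Metric.ball (0:ℂ) 1 ∩ φ ⁻¹' {z}), (multOf φ z ζ : ℝ) * wstar ω ‖(ζ : ℂ)‖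

/-- `N_{φ,ω*}(z) ≤ ω*((z - φ(0))/(1 - conj(φ(0)) z))` for `z ≠ φ(0)`. -/
theorem stmt_5 (ω : ℝ → ℝ)
    (hω_nonneg : ∀ r ∈ Set.Ico (0:ℝ) 1, 0 ≤ ω r)
    (hω_int : IntegrableOn ω (Set.Ioo (0:ℝ) 1))
    (φ : ℂ → ℂ) (hφ : DifferentiableOn ℂ φ (Metric.ball 0 1))
    (hmaps : Set.MapsTo φ (Metric.ball 0 1) (Metric.ball 0 1))
    (z : ℂ) (hz : z ∈ Metric.ball (0:ℂ) 1) (hz0 : z ≠ φ 0) :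
    nev ω φ z ≤ wstar ω ‖(z - φ 0) / (1 - (starRingEnd ℂ) (φ 0) * z)‖ := by
  have h01 : (0:ℂ) ∈ ball (0:ℂ) 1 := mem_ball_self one_pos
  have hφ0 : φ 0 ∈ ball (0:ℂ) 1 := hmaps h01
  have hφ0n : ‖φ 0‖ < 1 := mem_ball_zero_iff.mp hφ0
  have hzn : ‖z‖ < 1 := mem_ball_zero_iff.mp hz
  have hden : ∀ w : ℂ, w ∈ ball (0:ℂ) 1 → (1 - (starRingEnd ℂ) z * φ w) ≠ 0 := by
    intro w hw h
    have hφw : ‖φ w‖ < 1 := mem_ball_zero_iff.mp (hmaps hw)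
    rw [sub_eq_zero] at h
    have h3 : (1:ℝ) = ‖(starRingEnd ℂ) z * φ w‖ := by rw [← h]; simp
    rw [norm_mul, RCLike.norm_conj] at h3
    nlinarith [norm_nonneg z, norm_nonneg (φ w)]
  set F : ℂ → ℂ := fun w => (φ w - z) / (1 - (starRingEnd ℂ) z * φ w) with hFdef
  have hdF : DifferentiableOn ℂ F (ball 0 1) :=
    DifferentiableOn.div (hφ.sub (differentiableOn_const z))
      ((differentiableOn_const 1).sub ((differentiableOn_const _).mul hφ)) hden
  have hbF : ∀ w ∈ ball (0:ℂ) 1, ‖F w‖ ≤ 1 := by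
    intro w hw
    have hφw : ‖φ w‖ < 1 := mem_ball_zero_iff.mp (hmaps hw)
    rw [hFdef]
    dsimp only
    rw [norm_div]
    have hlt : ‖φ w - z‖ < ‖1 - (starRingEnd ℂ) z * φ w‖ := mobius_lt_one hφw hzn
    have hpos : 0 < ‖1 - (starRingEnd ℂ) z * φ w‖ := norm_pos_iff.mpr (hden w hw)
    exact le_of_lt ((div_lt_one hpos).mpr hlt)
  have hd0 : 0 < ‖F 0‖ := by
    rw [hFdef]
    dsimp only
    exact norm_pos_iff.mpr
      (div_ne_zero (sub_ne_zero.mpr fun h => hz0 h.symm) (hden 0 h01))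
  have hd1 : ‖F 0‖ < 1 := by
    rw [hFdef]
    dsimp only
    rw [norm_div]
    exact (div_lt_one (norm_pos_iff.mpr (hden 0 h01))).mpr (mobius_lt_one hφ0n hzn)
  have hnorm_eq : ‖F 0‖ = ‖(z - φ 0) / (1 - (starRingEnd ℂ) (φ 0) * z)‖ := by
    rw [hFdef]
    dsimp only
    rw [norm_div, norm_div]
    congr 1
    · exact norm_sub_rev _ _
    · have hc : (starRingEnd ℂ) (1 - (starRingEnd ℂ) (φ 0) * z) = 1 - (starRingEnd ℂ) z * φ 0 := by
        rw [map_sub, map_one, map_mul, Complex.conj_conj]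
        ring
      rw [← hc, RCLike.norm_conj]
  have hfac : ∀ ζ : ℂ, ζ ∈ ball (0:ℂ) 1 → φ ζ = z →
      ∃ g : ℂ → ℂ, ContinuousAt g ζ ∧
        ∀ᶠ w in 𝓝[≠] ζ, F w = (w - ζ) ^ (multOf φ z ζ) * g w := by
    intro ζ hζb hζz
    have hA : AnalyticAt ℂ (fun w => φ w - z) ζ :=
      (hφ.sub (differentiableOn_const z)).analyticAt (isOpen_ball.mem_nhds hζb)
    have hmult : multOf φ z ζ = (analyticOrderAt (fun w => φ w - z) ζ).toNat := dif_pos hA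
    have hcd : ContinuousAt (fun w => 1 - (starRingEnd ℂ) z * φ w) ζ :=
      continuousAt_const.sub (continuousAt_const.mul
        (hφ.differentiableAt (isOpen_ball.mem_nhds hζb)).continuousAt)
    rcases eq_or_ne (analyticOrderAt (fun w => φ w - z) ζ) ⊤ with htop | hfin
    · refine ⟨F, (hdF.differentiableAt (isOpen_ball.mem_nhds hζb)).continuousAt, ?_⟩
      rw [hmult, htop]
      exact Filter.Eventually.of_forall fun w => by simp
    · obtain ⟨n, hn⟩ : ∃ n : ℕ, analyticOrderAt (fun w => φ w - z) ζ = (n : ℕ∞) := ⟨(analyticOrderAt (fun w => φ w - z) ζ).toNat, (ENat.coe_toNat hfin).symm⟩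
      obtain ⟨g, hgan, hgne, hgev⟩ := (hA.analyticOrderAt_eq_natCast (n := n)).mp hn
      refine ⟨fun w => g w / (1 - (starRingEnd ℂ) z * φ w),
        hgan.continuousAt.div hcd (hden ζ hζb), ?_⟩
      have hmn : multOf φ z ζ = n := by rw [hmult, hn]; simp
      rw [hmn]
      filter_upwards [hgev.filter_mono nhdsWithin_le_nhds] with w hw
      rw [hFdef]
      dsimp only
      rw [hw, smul_eq_mul, mul_div_assoc]
  unfold nev
  by_cases hsum : Summable (fun ζ : ↥(Metric.ball (0:ℂ) 1 ∩ φ ⁻¹' {z}) =>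
      (multOf φ z ζ : ℝ) * wstar ω ‖(ζ : ℂ)‖)
  · refine Summable.tsum_le_of_sum_le hsum fun t => ?_
    rw [← hnorm_eq]
    have himg : ∑ ζ ∈ t.image Subtype.val, (multOf φ z ζ : ℝ) * wstar ω ‖ζ‖
        = ∑ i ∈ t, (multOf φ z (i:ℂ) : ℝ) * wstar ω ‖(i:ℂ)‖ :=
      Finset.sum_image fun i _ j _ h => Subtype.ext h
    rw [← himg]
    refine finset_bound ω hω_nonneg hω_int F hdF hbF hd0 hd1 _ _ ?_ ?_
    · intro ζ hζ
      obtain ⟨i, hi, rfl⟩ := Finset.mem_image.mp hζ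
      exact i.2.1
    · intro ζ hζ
      obtain ⟨i, hi, rfl⟩ := Finset.mem_image.mp hζ
      exact hfac _ i.2.1 i.2.2
  · rw [tsum_eq_zero_of_not_summable hsum]
    exact wstar_nonneg ω hω_nonneg (norm_nonneg _)
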